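/- If α is a locally Lipschitz class K function, h:[0,t_f)→ℝ is continuously differentiable with ḣ(t) ≥ -α(h(t)) for all t, and h(0) > 0, then h(t) > 0 for all t ∈ [0,t_f). -/
import Mathlib


lemma linear_bound (α : ℝ → ℝ) (hα_mono : StrictMonoOn α (Set.Ici 0))
    (hα_zero : α 0 = 0) (hα_lip : LocallyLipschitz α) (M : ℝ) (hM : 0 < M) :
    ∃ C : ℝ, 0 ≤ C ∧ ∀ x ∈ Set.Icc (0:ℝ) M, α x ≤ C * x := by
  obtain ⟨K, t, ht, hlip⟩ := hα_lip 0
  obtain ⟨ε, hε, hball⟩ := Metric.mem_nhds_iff.mp ht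
  set δ : ℝ := min (ε / 2) M with hδdef
  have hδpos : 0 < δ := lt_min (by linarith) hM
  have hαM : 0 ≤ α M := by
    rw [← hα_zero]
    exact (hα_mono.le_iff_le (Set.mem_Ici.mpr le_rfl) (Set.mem_Ici.mpr hM.le)).mpr hM.le
  refine ⟨max K (α M / δ), le_trans (le_max_left _ _) le_rfl |>.trans' K.coe_nonneg, ?_⟩
  intro x hx
  rcases le_or_gt x δ with hxδ | hxδ
  · -- use Lipschitz near 0
    have hx0 : x ∈ t := hball (by
      simp only [Metric.mem_ball, Real.dist_eq, sub_zero]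
      rw [abs_of_nonneg hx.1]
      calc x ≤ δ := hxδ
        _ ≤ ε / 2 := min_le_left _ _
        _ < ε := by linarith)
    have h0t : (0:ℝ) ∈ t := hball (by simpa using hε)
    have := hlip.dist_le_mul x hx0 0 h0t
    rw [Real.dist_eq, Real.dist_eq, hα_zero, sub_zero, sub_zero,
      abs_of_nonneg hx.1] at this
    have : α x ≤ K * x := (le_abs_self _).trans this
    calc α x ≤ K * x := this
      _ ≤ max (K:ℝ) (α M / δ) * x := mul_le_mul_of_nonneg_right (le_max_left _ _) hx.1
  · -- use monotonicity
    have h1 : α x ≤ α M := by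
      rcases eq_or_lt_of_le hx.2 with rfl | hlt
      · exact le_rfl
      · exact (hα_mono (Set.mem_Ici.mpr hx.1) (Set.mem_Ici.mpr hM.le) hlt).le
    have h2 : α M = (α M / δ) * δ := by field_simp
    calc α x ≤ α M := h1
      _ = (α M / δ) * δ := h2
      _ ≤ (α M / δ) * x := mul_le_mul_of_nonneg_left hxδ.le (div_nonneg hαM hδpos.le)
      _ ≤ max (K:ℝ) (α M / δ) * x := mul_le_mul_of_nonneg_right (le_max_right _ _)
          (hδpos.le.trans hxδ.le)

/-- Comparison lemma: if `α` is a locally Lipschitz class-K function and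
`h : [0, t_f) → ℝ` is continuously differentiable with `ḣ(t) ≥ -α(h(t))`
on `[0, t_f)` and `h 0 ≥ 0`, then `h t ≥ 0` on `[0, t_f)`.
Here `t_f : EReal` may be `⊤` (infinite horizon). -/
theorem stmt1
    (tf : EReal) (htf : 0 < tf)
    (α : ℝ → ℝ)
    (hα_cont : Continuous α)
    (hα_mono : StrictMonoOn α (Set.Ici 0))
    (hα_zero : α 0 = 0)
    (hα_lip : LocallyLipschitz α)
    (h h' : ℝ → ℝ)
    (hderiv : ∀ t : ℝ, 0 ≤ t → (t : EReal) < tf → HasDerivAt h (h' t) t)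
    (h'cont : ContinuousOn h' {t : ℝ | 0 ≤ t ∧ (t : EReal) < tf})
    (hineq : ∀ t : ℝ, 0 ≤ t → (t : EReal) < tf → h' t ≥ -α (h t))
    (h0 : h 0 > 0) :
    ∀ t : ℝ, 0 ≤ t → (t : EReal) < tf → h t > 0 := by
  intro t0 ht0 ht0f
  by_contra hle
  push_neg at hle
  -- all points of [0, t0] are in the domain
  have hdom : ∀ t ∈ Set.Icc (0:ℝ) t0, 0 ≤ t ∧ (t : EReal) < tf := by
    intro t ht
    exact ⟨ht.1, lt_of_le_of_lt (EReal.coe_le_coe_iff.mpr ht.2) ht0f⟩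
  have hd : ∀ t ∈ Set.Icc (0:ℝ) t0, HasDerivAt h (h' t) t := fun t ht =>
    hderiv t (hdom t ht).1 (hdom t ht).2
  have hcont : ContinuousOn h (Set.Icc 0 t0) := fun t ht =>
    (hd t ht).continuousAt.continuousWithinAt
  -- the set of times where h ≤ 0
  set S : Set ℝ := {t ∈ Set.Icc (0:ℝ) t0 | h t ≤ 0} with hSdef
  have hSne : S.Nonempty := ⟨t0, ⟨Set.mem_Icc.mpr ⟨ht0, le_rfl⟩, hle⟩⟩
  have hSclosed : IsClosed S := by
    have : S = Set.Icc (0:ℝ) t0 ∩ h ⁻¹' Set.Iic 0 := by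
      ext x; simp [hSdef, Set.mem_Icc, and_comm]
    rw [this]
    exact hcont.preimage_isClosed_of_isClosed isClosed_Icc isClosed_Iic
  have hSbdd : BddBelow S := ⟨0, fun x hx => hx.1.1⟩
  set s := sInf S with hsdef
  have hsS : s ∈ S := hSclosed.csInf_mem hSne hSbdd
  have hs0 : 0 ≤ s := hsS.1.1
  have hst0 : s ≤ t0 := hsS.1.2
  have hsneg : h s ≤ 0 := hsS.2
  have hspos : 0 < s := by
    rcases eq_or_lt_of_le hs0 with he | h'
    · rw [← he] at hsneg; linarith
    · exact h'
  have hpos : ∀ t ∈ Set.Ico (0:ℝ) s, 0 < h t := by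
    intro t ht
    by_contra hc
    push_neg at hc
    have : t ∈ S := ⟨Set.mem_Icc.mpr ⟨ht.1, ht.2.le.trans hst0⟩, hc⟩
    exact absurd (csInf_le hSbdd this) (not_le.mpr ht.2)
  -- bound on h over [0, s]
  have hsub : Set.Icc (0:ℝ) s ⊆ Set.Icc 0 t0 := Set.Icc_subset_Icc le_rfl hst0
  have hconts : ContinuousOn h (Set.Icc 0 s) := hcont.mono hsub
  obtain ⟨M0, hM0⟩ := (isCompact_Icc.image_of_continuousOn hconts).bddAbove
  set M : ℝ := max M0 1 with hMdef
  have hM : 0 < M := lt_of_lt_of_le one_pos (le_max_right _ _)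
  have hhM : ∀ t ∈ Set.Icc (0:ℝ) s, h t ≤ M :=
    fun t ht => le_trans (hM0 ⟨t, ht, rfl⟩) (le_max_left _ _)
  obtain ⟨C, hC0, hC⟩ := linear_bound α hα_mono hα_zero hα_lip M hM
  -- the auxiliary function g
  set g : ℝ → ℝ := fun t => h t * Real.exp (C * t) with hgdef
  have hgd : ∀ t ∈ Set.Icc (0:ℝ) s, HasDerivAt g
      (h' t * Real.exp (C * t) + h t * (Real.exp (C * t) * (C * 1))) t := by
    intro t ht
    exact (hd t (hsub ht)).mul (((hasDerivAt_id t).const_mul C).exp)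
  have hgc : ContinuousOn g (Set.Icc 0 s) := fun t ht =>
    ((hgd t ht).continuousAt).continuousWithinAt
  have hmono : MonotoneOn g (Set.Icc 0 s) := by
    apply monotoneOn_of_deriv_nonneg (convex_Icc 0 s) hgc
    · intro t ht
      rw [interior_Icc] at ht
      exact ((hgd t ⟨ht.1.le, ht.2.le⟩).differentiableAt).differentiableWithinAt
    · intro t ht
      rw [interior_Icc] at ht
      have htIcc : t ∈ Set.Icc (0:ℝ) s := ⟨ht.1.le, ht.2.le⟩
      rw [(hgd t htIcc).deriv]
      have hht : 0 < h t := hpos t ⟨ht.1.le, ht.2⟩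
      have hαle : α (h t) ≤ C * h t := hC (h t) ⟨hht.le, hhM t htIcc⟩
      have hineq' : h' t ≥ -α (h t) :=
        hineq t (hdom t (hsub htIcc)).1 (hdom t (hsub htIcc)).2
      have key : 0 ≤ h' t + C * h t := by linarith
      have : h' t * Real.exp (C * t) + h t * (Real.exp (C * t) * (C * 1))
          = (h' t + C * h t) * Real.exp (C * t) := by ring
      rw [this]
      positivity
  have hg0 : g 0 = h 0 := by simp [hgdef]
  have h1 : g 0 ≤ g s := hmono ⟨le_rfl, hs0⟩ ⟨hs0, le_rfl⟩ hs0
  have h2 : g s ≤ 0 := mul_nonpos_of_nonpos_of_nonneg hsneg (Real.exp_pos _).le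
  rw [hg0] at h1
  linarith
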